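/- Let B be an ordered multiplicative category with interior structure I, and B̃ its exterior quotient. For objects Q, R, T and a morphism α ∈ B(R,Q) with image α̃, the set B̃(T,Q)_{α̃} of B̃-morphisms not (even partially) extendable via α̃ equals the image in B̃(T,Q) of B(T,Q)_α. -/

import Mathlib

open CategoryTheory Limits

universe v u

/-- Objects of the additive cover `ac(B)`: finite families of `B`-objects. -/
structure ACObj (B : Type u) : Type (u + 1) where
  I : Type
  [fin : Finite I]
  obj : I → B

attribute [instance] ACObj.fin

/-- Morphisms of the additive cover. -/
structure ACHom {B : Type u} [Category.{v} B] (X Y : ACObj B) where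
  f : X.I → Y.I
  φ : ∀ j : X.I, X.obj j ⟶ Y.obj (f j)

/-- The additive cover `ac(B)` of a category `B`. -/
instance ACCategory (B : Type u) [Category.{v} B] : Category (ACObj B) where
  Hom := ACHom
  id X := ⟨fun j => j, fun j => 𝟙 _⟩
  comp {X Y Z} g h := ⟨fun j => h.f (g.f j), fun j => g.φ j ≫ h.φ (g.f j)⟩
  id_comp f := by
    cases f with
    | mk ff φ => simp only [Category.id_comp]
  comp_id f := by
    cases f with
    | mk ff φ => simp only [Category.comp_id]
  assoc f g h := by
    cases f; cases g; cases h; simp only [Category.assoc]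

/-- `θ'` divides `α` if `α` factors through `θ'`. -/
def Divides {C : Type*} [Category C] {Q Q' R : C} (θ' : Q ⟶ Q') (α : Q ⟶ R) :
    Prop :=
  ∃ α' : Q' ⟶ R, θ' ≫ α' = α

/-- `C(T,Q)_α`: the morphisms `β : Q ⟶ T` which cannot, even partially, be
extended via `α`. -/
def RSet {C : Type*} [Category C] {Q R : C} (α : Q ⟶ R) (T : C) :
    Set (Q ⟶ T) :=
  {β | ¬ ∃ (Q' : C) (θ' : Q ⟶ Q'),
        ¬ IsIso θ' ∧ Divides θ' α ∧ ∃ β' : Q' ⟶ T, θ' ≫ β' = β}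

/-- The hom-relation defining the exterior quotient `B̃ = B/I`. -/
def extRel {B : Type u} [Category.{v} B] (I : ∀ Q : B, Subgroup (Aut Q)) :
    HomRel B :=
  fun {_ Q} f g => ∃ χ ∈ I Q, g = f ≫ χ.hom

section Aux

variable {B : Type u} [Category.{v} B] (I : ∀ Q : B, Subgroup (Aut Q))

lemma extRel_congruence
    (hI : ∀ {R Q : B} (φ : R ⟶ Q), ∀ ρ ∈ I R, ∃ χ ∈ I Q,
      ρ.hom ≫ φ = φ ≫ χ.hom) :
    CategoryTheory.Congruence (extRel I) := by
  refine { equivalence := ?_, comp_left := ?_, comp_right := ?_ }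
  rotate_right
  · intro X Y
    constructor
    · intro f; exact ⟨1, one_mem _, (Category.comp_id f).symm⟩
    · rintro f g ⟨χ, hχ, rfl⟩
      refine ⟨χ⁻¹, inv_mem hχ, ?_⟩
      simp [Aut.Aut_inv_def, Iso.symm_hom (χ : Y ≅ Y), Iso.hom_inv_id (χ : Y ≅ Y)]
    · rintro f g h ⟨χ, hχ, rfl⟩ ⟨χ', hχ', rfl⟩
      refine ⟨χ' * χ, mul_mem hχ' hχ, ?_⟩
      simp [Aut.Aut_mul_def, Iso.trans_hom (χ : Y ≅ Y) (χ' : Y ≅ Y)]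
  · rintro X Y Z f g g' ⟨χ, hχ, rfl⟩
    exact ⟨χ, hχ, by simp⟩
  · rintro X Y Z f f' g ⟨χ, hχ, rfl⟩
    obtain ⟨χ', hχ', hcomm⟩ := hI g χ hχ
    exact ⟨χ', hχ', by rw [Category.assoc, hcomm, Category.assoc]⟩

lemma quotient_reflects_iso
    (hI : ∀ {R Q : B} (φ : R ⟶ Q), ∀ ρ ∈ I R, ∃ χ ∈ I Q,
      ρ.hom ≫ φ = φ ≫ χ.hom)
    {X Y : B} (θ : X ⟶ Y)
    (h : IsIso ((Quotient.functor (extRel I)).map θ)) : IsIso θ := by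
  haveI := extRel_congruence I hI
  set F := Quotient.functor (extRel I)
  obtain ⟨σ, hσ⟩ := F.map_surjective (inv (F.map θ))
  have h1 : F.map (θ ≫ σ) = F.map (𝟙 X) := by
    simp [F.map_comp, hσ]
  have h2 : F.map (σ ≫ θ) = F.map (𝟙 Y) := by
    simp [F.map_comp, hσ]
  rw [CategoryTheory.Quotient.functor_map_eq_iff] at h1 h2
  obtain ⟨χ, hχ, hret⟩ := h1
  obtain ⟨χ', hχ', hsec⟩ := h2
  -- `θ ≫ (σ ≫ χ.hom) = 𝟙 X`
  have hretract : θ ≫ (σ ≫ χ.hom) = 𝟙 X := by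
    rw [← Category.assoc]; exact hret.symm
  -- θ is an epi
  have hsec' : σ ≫ (θ ≫ χ'.hom) = 𝟙 Y := by
    rw [← Category.assoc]; exact hsec.symm
  haveI : Epi (θ ≫ χ'.hom) := epi_of_epi_fac hsec'
  haveI : Epi θ := by
    have h3 : Epi ((θ ≫ χ'.hom) ≫ χ'.inv) :=
      haveI : Epi χ'.inv := @IsIso.epi_of_iso _ _ _ _ χ'.inv (Iso.isIso_inv (χ' : Y ≅ Y))
      epi_comp _ _
    have h4 : χ'.hom ≫ χ'.inv = 𝟙 Y := Iso.hom_inv_id (χ' : Y ≅ Y)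
    rw [Category.assoc, h4, Category.comp_id] at h3
    exact h3
  refine ⟨σ ≫ χ.hom, hretract, ?_⟩
  have : θ ≫ ((σ ≫ χ.hom) ≫ θ) = θ ≫ 𝟙 Y := by
    rw [← Category.assoc, hretract, Category.id_comp, Category.comp_id]
  exact (cancel_epi θ).mp this

end Aux

/-- Let `B` be an ordered multiplicative category with interior structure `I`
and exterior quotient `B̃`.  For objects `Q`, `R`, `T` and `α ∈ B(R,Q)` with
image `α̃` in `B̃`, the set `B̃(T,Q)_{α̃}` equals the image in `B̃(T,Q)` of
`B(T,Q)_α`. -/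
theorem restricted_set_of_exterior_quotient
    {B : Type u} [Category.{v} B] [Finite B]
    (hfin : ∀ Q R : B, Finite (Q ⟶ R))
    (hord : ∀ Q R : B, Nonempty (R ⟶ Q) → Nonempty (Q ⟶ R) →
      ∀ f : R ⟶ Q, IsIso f)
    [HasBinaryProducts (ACObj B)]
    (I : ∀ Q : B, Subgroup (Aut Q))
    (hI : ∀ {R Q : B} (φ : R ⟶ Q), ∀ ρ ∈ I R, ∃ χ ∈ I Q,
      ρ.hom ≫ φ = φ ≫ χ.hom)
    (Q R T : B) (α : Q ⟶ R) :
    RSet ((Quotient.functor (extRel I)).map α)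
        ((Quotient.functor (extRel I)).obj T)
      = (Quotient.functor (extRel I)).map '' (RSet α T) := by
  haveI := extRel_congruence I @hI
  set F := Quotient.functor (extRel I) with hF
  ext βq
  constructor
  · intro hβ
    obtain ⟨β, rfl⟩ := F.map_surjective βq
    refine ⟨β, ?_, rfl⟩
    intro ⟨Q', θ', hniso, ⟨α', hα'⟩, β', hβ'⟩
    refine hβ ⟨F.obj Q', F.map θ', ?_, ⟨F.map α', ?_⟩, F.map β', ?_⟩
    · intro hiso
      exact hniso (quotient_reflects_iso I @hI θ' hiso)
    · rw [← F.map_comp, hα']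
    · rw [← F.map_comp, hβ']
  · rintro ⟨β, hβ, rfl⟩
    intro ⟨Qq', θq', hniso, ⟨αq', hαq'⟩, βq', hβq'⟩
    obtain ⟨θ, hθ⟩ := F.map_surjective (X := Q) (Y := Qq'.as) θq'
    obtain ⟨α', hα'⟩ := F.map_surjective (X := Qq'.as) (Y := R) αq'
    obtain ⟨β', hβ'⟩ := F.map_surjective (X := Qq'.as) (Y := T) βq'
    have hα : F.map (θ ≫ α') = F.map α := by rw [F.map_comp, hθ, hα']; exact hαq'
    have hβc : F.map (θ ≫ β') = F.map β := by rw [F.map_comp, hθ, hβ']; exact hβq'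
    rw [CategoryTheory.Quotient.functor_map_eq_iff] at hα hβc
    obtain ⟨χ, hχ, hα2⟩ := hα
    obtain ⟨χ', hχ', hβ2⟩ := hβc
    refine hβ ⟨Qq'.as, θ, ?_, ⟨α' ≫ χ.hom, by rw [← Category.assoc, ← hα2]⟩,
      β' ≫ χ'.hom, by rw [← Category.assoc, ← hβ2]⟩
    intro hiso
    exact hniso (hθ ▸ (inferInstance : IsIso (F.map θ)))
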